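/- arXiv:1908.07247 — 6 statements merged into one kernel-verified Lean document; each statement's English description precedes it below -/
import Mathlib

section
/- Let J ∈ ℝ^{m×n} be a matrix with full column rank (i.e., its columns are linearly independent, equivalently x ↦ Jx is injective), b ∈ ℝ^m, and p, q, z, Δz, Λ_p, Λ_q ∈ ℝⁿ with p ≤ z ≤ q componentwise. Suppose the KKT conditions of the BVLS subproblem hold: Jᵀ(JΔz + b) + Λ_q − Λ_p = 0; p − z ≤ Δz ≤ q − z componentwise; Λ_p ≥ 0 and Λ_q ≥ 0 componentwise; and for every coordinate j, Λ_q(j)·(Δz(j) − (q(j) − z(j))) = 0 and Λ_p(j)·((p(j) − z(j)) − Δz(j)) = 0. If Δz ≠ 0, then ⟨b, JΔz⟩ < 0. -/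
open scoped RealInnerProductSpace
open Matrix

/-- Identification of a vector `Fin k → ℝ` with a point of Euclidean space (they are
definitionally equal; this is just a type-level cast). -/
def toEuc {k : ℕ} (x : Fin k → ℝ) : EuclideanSpace ℝ (Fin k) := WithLp.toLp 2 x

/-- Lemma 2 (descent direction): if `J` has full column rank, `p ≤ z ≤ q`, the KKT
conditions of the BVLS subproblem `min_{p−z ≤ Δẑ ≤ q−z} ‖JΔẑ + b‖²` hold at `Δz` with
multipliers `Λ_p, Λ_q`, and `Δz ≠ 0`, then `⟨b, JΔz⟩ < 0`. -/
theorem bvls_descent_direction (m n : ℕ) (J : Matrix (Fin m) (Fin n) ℝ)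
    (hrank : Function.Injective fun x : Fin n → ℝ => J.mulVec x)
    (b : EuclideanSpace ℝ (Fin m)) (p q z Δz Λp Λq : EuclideanSpace ℝ (Fin n))
    (hbox : ∀ j, p j ≤ z j ∧ z j ≤ q j)
    (hstat : toEuc (Jᵀ.mulVec (toEuc (J.mulVec Δz) + b)) + Λq - Λp = 0)
    (hfeas : ∀ j, p j - z j ≤ Δz j ∧ Δz j ≤ q j - z j)
    (hΛp : ∀ j, 0 ≤ Λp j) (hΛq : ∀ j, 0 ≤ Λq j)
    (hcompq : ∀ j, Λq j * (Δz j - (q j - z j)) = 0)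
    (hcompp : ∀ j, Λp j * ((p j - z j) - Δz j) = 0)
    (hΔz : Δz ≠ 0) :
    ⟪b, toEuc (J.mulVec Δz)⟫ < 0 := by
  classical
  set v : Fin m → ℝ := J.mulVec Δz with hv
  set w : Fin m → ℝ := fun i => v i + b i with hw
  have hvne : v ≠ 0 := by
    intro h
    apply hΔz
    have h0 : (fun x : Fin n → ℝ => J.mulVec x) Δz = (fun x : Fin n → ℝ => J.mulVec x) 0 := by
      simpa [Matrix.mulVec_zero, hv] using h
    exact WithLp.ofLp_injective 2 (hrank h0)
  have hstat' : ∀ j, (Jᵀ.mulVec w) j = Λp j - Λq j := by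
    intro j
    have h2 : (Jᵀ.mulVec w) j + Λq j - Λp j = (0 : ℝ) := by
      have h3 := congrArg (fun x : EuclideanSpace ℝ (Fin n) => x j) hstat
      simp only [toEuc, PiLp.sub_apply, PiLp.add_apply, PiLp.zero_apply, WithLp.ofLp_toLp] at h3
      exact h3
    linarith
  have hkey : Δz ⬝ᵥ (Jᵀ.mulVec w) = v ⬝ᵥ v + v ⬝ᵥ b := by
    rw [Matrix.dotProduct_mulVec, Matrix.vecMul_transpose, ← hv]
    simp [hw, dotProduct, mul_add, Finset.sum_add_distrib]
  have hsum : Δz ⬝ᵥ (fun j => Λp j - Λq j) ≤ 0 := by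
    apply Finset.sum_nonpos
    intro j _
    have h1 := hcompp j
    have h2 := hcompq j
    have h3 := hΛp j
    have h4 := hΛq j
    have h5 := (hbox j).1
    have h6 := (hbox j).2
    have hp : Λp j * Δz j ≤ 0 := by nlinarith [mul_nonpos_of_nonneg_of_nonpos h3 (by linarith : p j - z j ≤ 0)]
    have hq : 0 ≤ Λq j * Δz j := by nlinarith [mul_nonneg h4 (by linarith : 0 ≤ q j - z j)]
    show Δz j * (Λp j - Λq j) ≤ 0
    nlinarith [hp, hq]
  have heq : Δz ⬝ᵥ (Jᵀ.mulVec w) = Δz ⬝ᵥ (fun j => Λp j - Λq j) := by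
    congr 1
    funext j
    exact hstat' j
  have hvv : 0 < v ⬝ᵥ v := by
    have hn : 0 ≤ v ⬝ᵥ v := Finset.sum_nonneg fun i _ => mul_self_nonneg (v i)
    rcases lt_or_eq_of_le hn with h | h
    · exact h
    · exact absurd ((dotProduct_self_eq_zero).mp h.symm) hvne
  have hbv : v ⬝ᵥ b < 0 := by
    have h := heq ▸ hkey
    linarith [hsum, hvv, h]
  have hib : ⟪b, toEuc v⟫ = b ⬝ᵥ v := by
    simp [PiLp.inner_apply, toEuc, dotProduct, RCLike.inner_apply, mul_comm]
  have hfin : ⟪b, toEuc v⟫ < 0 := by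
    rw [hib, dotProduct_comm]
    exact hbv
  exact hfin
end

section
/- Let r : ℝⁿ → ℝ^m be differentiable at z with derivative the linear map x ↦ Jx for a matrix J ∈ ℝ^{m×n} of full column rank, and set b = r(z) and f(x) = (1/2)‖r(x)‖². Let p, q, Δz, Λ_p, Λ_q satisfy: p ≤ z ≤ q componentwise; Jᵀ(JΔz + b) + Λ_q − Λ_p = 0; p − z ≤ Δz ≤ q − z componentwise; Λ_p ≥ 0 and Λ_q ≥ 0 componentwise; Λ_q(j)·(Δz(j) − (q(j) − z(j))) = 0 and Λ_p(j)·((p(j) − z(j)) − Δz(j)) = 0 for every coordinate j; and Δz ≠ 0. Then for every c ∈ (0,1) there exists α with 0 < α ≤ 1 such that f(z + α·Δz) − f(z) < c·α·⟨r(z), JΔz⟩. -/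
open scoped RealInnerProductSpace
open Matrix

/-- Theorem 1 (global convergence of BVNLLS): let `r` be differentiable at `z` with derivative
`x ↦ Jx`, with `J` of full column rank, and set `b = r(z)`, `f(x) = (1/2)‖r(x)‖²`. If the KKT
conditions of the BVLS subproblem `min_{p−z ≤ Δẑ ≤ q−z} ‖JΔẑ + b‖²` hold at `Δz ≠ 0` with
multipliers `Λ_p, Λ_q` and `p ≤ z ≤ q`, then for every `c ∈ (0,1)` there exists a step size
`α ∈ (0,1]` achieving the Armijo decrease `f(z + α·Δz) − f(z) < c·α·⟨r(z), JΔz⟩`. -/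
theorem bvnlls_global_convergence (n m : ℕ)
    (r : EuclideanSpace ℝ (Fin n) → EuclideanSpace ℝ (Fin m))
    (z : EuclideanSpace ℝ (Fin n))
    (J : Matrix (Fin m) (Fin n) ℝ)
    (J' : EuclideanSpace ℝ (Fin n) →L[ℝ] EuclideanSpace ℝ (Fin m))
    (hJ' : ∀ x, J' x = toEuc (J.mulVec x))
    (hder : HasFDerivAt r J' z)
    (hrank : Function.Injective fun x : Fin n → ℝ => J.mulVec x)
    (b : EuclideanSpace ℝ (Fin m)) (hb : b = r z)
    (f : EuclideanSpace ℝ (Fin n) → ℝ) (hf : ∀ x, f x = (1 / 2 : ℝ) * ‖r x‖ ^ 2)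
    (p q Δz Λp Λq : EuclideanSpace ℝ (Fin n))
    (hbox : ∀ j, p j ≤ z j ∧ z j ≤ q j)
    (hstat : toEuc (Jᵀ.mulVec (toEuc (J.mulVec Δz) + b)) + Λq - Λp = 0)
    (hfeas : ∀ j, p j - z j ≤ Δz j ∧ Δz j ≤ q j - z j)
    (hΛp : ∀ j, 0 ≤ Λp j) (hΛq : ∀ j, 0 ≤ Λq j)
    (hcompq : ∀ j, Λq j * (Δz j - (q j - z j)) = 0)
    (hcompp : ∀ j, Λp j * ((p j - z j) - Δz j) = 0)
    (hΔz : Δz ≠ 0)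
    (c : ℝ) (hc0 : 0 < c) (hc1 : c < 1) :
    ∃ α : ℝ, 0 < α ∧ α ≤ 1 ∧
      f (z + α • Δz) - f z < c * α * ⟪r z, toEuc (J.mulVec Δz)⟫ := by
  set u : EuclideanSpace ℝ (Fin m) := toEuc (J.mulVec Δz) with hu
  set D : ℝ := ⟪r z, u⟫ with hD
  have hu0 : u ≠ 0 := by
    intro h
    apply hΔz
    have h2 : J.mulVec Δz = J.mulVec 0 := by
      have h' := congrArg (fun x : EuclideanSpace ℝ (Fin m) => (x : Fin m → ℝ)) h
      simpa [Matrix.mulVec_zero, hu, toEuc] using h'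
    exact WithLp.ofLp_injective 2 (by simpa using hrank h2)
  have hstat' : ∀ j, Jᵀ.mulVec (fun i => u i + b i) j = Λp j - Λq j := by
    intro j
    have h1 := congrFun (congrArg (fun x : EuclideanSpace ℝ (Fin n) => (x : Fin n → ℝ)) hstat) j
    have h2 : Jᵀ.mulVec (fun i => u i + b i) j + Λq j - Λp j = 0 := by
      have he : (fun i => u i + b i) = u.ofLp + b.ofLp := rfl
      rw [he]; simpa [toEuc] using h1
    linarith
  have hdot : ∀ v : Fin m → ℝ, ∑ i, v i * (J.mulVec Δz) i = ∑ j, (Jᵀ.mulVec v) j * Δz j := by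
    intro v
    simpa [dotProduct, Matrix.mulVec_transpose] using Matrix.dotProduct_mulVec v J Δz
  have hkey : ⟪u + b, u⟫ = ∑ j, (Λp j - Λq j) * Δz j := by
    have h1 : ⟪u + b, u⟫ = ∑ i, (fun i => u i + b i) i * (J.mulVec Δz) i := by
      simp only [PiLp.inner_apply, hu, toEuc, RCLike.inner_apply, conj_trivial]
      exact Finset.sum_congr rfl fun i _ => mul_comm _ _
    rw [h1, hdot]
    exact Finset.sum_congr rfl fun j _ => by rw [hstat' j]
  have hterm : ∀ j, (Λp j - Λq j) * Δz j ≤ 0 := by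
    intro j
    have hp : Λp j * Δz j = Λp j * (p j - z j) := by nlinarith [hcompp j]
    have hq : Λq j * Δz j = Λq j * (q j - z j) := by nlinarith [hcompq j]
    have h1 : Λp j * (p j - z j) ≤ 0 :=
      mul_nonpos_of_nonneg_of_nonpos (hΛp j) (by linarith [(hbox j).1])
    have h2 : 0 ≤ Λq j * (q j - z j) :=
      mul_nonneg (hΛq j) (by linarith [(hbox j).2])
    nlinarith
  have hsum : ⟪u + b, u⟫ ≤ 0 := hkey ▸ Finset.sum_nonpos fun j _ => hterm j
  have hDneg : D < 0 := by
    have h1 : ⟪u + b, u⟫ = ‖u‖ ^ 2 + ⟪b, u⟫ := by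
      rw [inner_add_left, real_inner_self_eq_norm_sq]
    have hb' : ⟪b, u⟫ = D := by rw [hD, hb]
    have hnorm : (0:ℝ) < ‖u‖ ^ 2 := pow_pos (norm_pos_iff.2 hu0) 2
    nlinarith
  -- directional derivative
  have h0 : z + (0:ℝ) • Δz = z := by simp
  have hline : HasDerivAt (fun α : ℝ => z + α • Δz) Δz 0 := by
    simpa using ((hasDerivAt_id (0:ℝ)).smul_const Δz).const_add z
  have hder' : HasFDerivAt r J' (z + (0:ℝ) • Δz) := by rw [h0]; exact hder
  have hcomp : HasDerivAt (fun α : ℝ => r (z + α • Δz)) u 0 := by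
    have h2 := hder'.comp_hasDerivAt 0 hline
    simpa [Function.comp_def, hJ' Δz, hu] using h2
  have hinner : HasDerivAt (fun α : ℝ => ⟪r (z + α • Δz), r (z + α • Δz)⟫) (2 * D) 0 := by
    have h2 := hcomp.inner ℝ hcomp
    rw [h0] at h2
    have h3 : ⟪r z, u⟫ + ⟪u, r z⟫ = 2 * D := by
      have h4 := real_inner_comm u (r z)
      rw [hD]; linarith
    rw [h3] at h2
    exact h2
  have hg : HasDerivAt (fun α : ℝ => f (z + α • Δz)) D 0 := by
    have heq : (fun α : ℝ => f (z + α • Δz)) =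
        fun α : ℝ => (1/2 : ℝ) * ⟪r (z + α • Δz), r (z + α • Δz)⟫ := by
      funext α
      rw [hf, real_inner_self_eq_norm_sq]
    rw [heq]
    have h2 := hinner.const_mul (1/2 : ℝ)
    have h3 : (1/2 : ℝ) * (2 * D) = D := by ring
    rw [h3] at h2
    exact h2
  -- slope argument
  set g : ℝ → ℝ := fun α => f (z + α • Δz) with hgdef
  have hg0 : g 0 = f z := by simp [hgdef]
  have hslope : Filter.Tendsto (slope g 0) (nhdsWithin 0 {(0:ℝ)}ᶜ) (nhds D) :=
    hasDerivAt_iff_tendsto_slope.mp hg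
  have hcD : D < c * D := by nlinarith
  have hev : ∀ᶠ α in nhdsWithin 0 {(0:ℝ)}ᶜ, slope g 0 α < c * D :=
    hslope.eventually_lt_const hcD
  have hev' : ∀ᶠ α in nhdsWithin (0:ℝ) (Set.Ioi 0), slope g 0 α < c * D :=
    hev.filter_mono (nhdsWithin_mono 0 (fun x hx => ne_of_gt hx))
  have hev1 : ∀ᶠ α in nhdsWithin (0:ℝ) (Set.Ioi 0), α ≤ 1 :=
    Filter.Eventually.filter_mono nhdsWithin_le_nhds
      (Filter.Tendsto.eventually_le_const (by norm_num : (0:ℝ) < 1) Filter.tendsto_id)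
  have hev2 : ∀ᶠ α in nhdsWithin (0:ℝ) (Set.Ioi 0), 0 < α :=
    eventually_mem_nhdsWithin
  obtain ⟨α, hα1, hα2, hα3⟩ := (hev'.and (hev1.and hev2)).exists
  refine ⟨α, hα3, hα2, ?_⟩
  have hslope_eq : slope g 0 α = (g α - g 0) / α := by simp [slope_def_field]
  rw [hslope_eq] at hα1
  have hfin := (div_lt_iff₀ hα3).mp hα1
  calc f (z + α • Δz) - f z = g α - g 0 := by rw [hg0]
    _ < c * D * α := hfin
    _ = c * α * D := by ring
end

section
/- Let M : Fin n₂ → ℝ^{n₁} be a family of vectors (the columns of a full-column-rank matrix, n₁ ≥ n₂). Then for every index i, the support of the i-th Gram–Schmidt vector is contained in the union of the supports of the first i+1 columns: supp(gramSchmidt ℝ M i) ⊆ ⋃_{j ≤ i} supp(M j). Moreover supp(gramSchmidt ℝ M 0) = supp(M 0). -/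
/-- Shortcut instance (the instance exists in Mathlib; restated to help elaboration). -/
instance (priority := high) finWellFoundedLT (n : ℕ) : WellFoundedLT (Fin n) :=
  inferInstance

/-- The nonzero structure (support) of a vector of `ℝ^k`: the set of indices of its
nonzero entries. -/
def supp {k : ℕ} (x : EuclideanSpace ℝ (Fin k)) : Set (Fin k) := {t | x t ≠ 0}

lemma supp_main {n₁ n₂ : ℕ} (M : Fin n₂ → EuclideanSpace ℝ (Fin n₁)) :
    ∀ i : Fin n₂, supp (InnerProductSpace.gramSchmidt ℝ M i) ⊆ ⋃ j ∈ Set.Iic i, supp (M j) := by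
  intro i
  induction i using WellFoundedLT.induction with
  | _ i ih =>
    intro t ht
    rw [InnerProductSpace.gramSchmidt_def ℝ M i] at ht
    simp only [supp, Set.mem_setOf_eq] at ht
    by_cases hMt : M i t ≠ 0
    · exact Set.mem_biUnion (Set.mem_Iic.2 le_rfl) hMt
    · push_neg at hMt
      have hsum : (∑ j ∈ Finset.Iio i,
          ((ℝ ∙ InnerProductSpace.gramSchmidt ℝ M j).starProjection (M i) : EuclideanSpace ℝ (Fin n₁))) t ≠ 0 := by
        intro h
        apply ht
        rw [WithLp.ofLp_sub, Pi.sub_apply]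
        rw [h, hMt, sub_zero]
      rw [WithLp.ofLp_sum, Finset.sum_apply] at hsum
      obtain ⟨j, hj, hjt⟩ := Finset.exists_ne_zero_of_sum_ne_zero hsum
      have hj' : j < i := Finset.mem_Iio.1 hj
      have hg : InnerProductSpace.gramSchmidt ℝ M j t ≠ 0 := by
        intro h0
        apply hjt
        rw [Submodule.starProjection_singleton]
        show (_ • InnerProductSpace.gramSchmidt ℝ M j) t = 0
        simp [h0]
      have := ih j hj' hg
      simp only [Set.mem_iUnion, Set.mem_Iic] at this ⊢
      obtain ⟨k, hk, hkt⟩ := this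
      exact ⟨k, hk.trans hj'.le, hkt⟩

/-- Theorem 2: for the columns `M` of a full-column-rank matrix (`n₁ ≥ n₂`), the support of
the `i`-th Gram–Schmidt vector is contained in the union of the supports of the first `i+1`
columns, and the support of the first Gram–Schmidt vector equals the support of the first
column. -/
theorem gramSchmidt_support_subset (n₁ n₂ : ℕ) [NeZero n₂] (hn : n₂ ≤ n₁)
    (M : Fin n₂ → EuclideanSpace ℝ (Fin n₁)) (hM : LinearIndependent ℝ M) :
    (∀ i : Fin n₂, supp (InnerProductSpace.gramSchmidt ℝ M i) ⊆ ⋃ j ∈ Set.Iic i, supp (M j)) ∧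
      supp (InnerProductSpace.gramSchmidt ℝ M 0) = supp (M 0) := by
  refine ⟨supp_main M, ?_⟩
  have h0 : (0 : Fin n₂) = ⊥ := rfl
  rw [h0]
  have hI : Finset.Iio (⊥ : Fin n₂) = ∅ := by ext x; simp
  rw [InnerProductSpace.gramSchmidt_def, hI, Finset.sum_empty, sub_zero]
end

section
/- Let M : Fin n₂ → ℝ^{n₁} be a linearly independent family of vectors, and let i, j' be indices such that (⋃_{j ≤ j'} supp(M j)) ∩ supp(M i) = ∅. Then ⟨gramSchmidtNormed ℝ M j, M i⟩ = 0 for every j ≤ j'; that is, the entries R(j, i) = ⟨Q_j, M_i⟩ of the R-factor of the thin QR factorization vanish for all j ≤ j'. -/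
open scoped RealInnerProductSpace

/-- Corollary 1: for a linearly independent family `M`, if the cumulative support of the
columns `M_0, …, M_{j'}` is disjoint from the support of column `M_i`, then the R-factor
entries `R(j, i) = ⟨Q_j, M_i⟩` of the thin QR factorization vanish for all `j ≤ j'`. -/
theorem qr_R_entries_vanish (n₁ n₂ : ℕ)
    (M : Fin n₂ → EuclideanSpace ℝ (Fin n₁)) (hM : LinearIndependent ℝ M)
    (i j' : Fin n₂)
    (hdisj : (⋃ j ∈ Set.Iic j', supp (M j)) ∩ supp (M i) = ∅) :
    ∀ j ≤ j', ⟪InnerProductSpace.gramSchmidtNormed ℝ M j, M i⟫ = 0 := by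
  intro j hj
  have key : ∀ x ∈ Submodule.span ℝ (M '' Set.Iic j'), ⟪x, M i⟫ = 0 := by
    intro x hx
    induction hx using Submodule.span_induction with
    | mem x hx =>
      obtain ⟨k, hk, rfl⟩ := hx
      rw [PiLp.inner_apply]
      refine Finset.sum_eq_zero fun t _ => ?_
      by_cases h : M i t = 0
      · simp [h]
      · have ht : (t : Fin n₁) ∉ ⋃ j ∈ Set.Iic j', supp (M j) := fun hmem =>
          Set.eq_empty_iff_forall_notMem.mp hdisj t ⟨hmem, h⟩
        have : M k t = 0 := by
          by_contra h'
          exact ht (Set.mem_biUnion hk h')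
        simp [this]
    | zero => simp
    | add x y _ _ hx hy => rw [inner_add_left, hx, hy, add_zero]
    | smul a x _ hx => rw [inner_smul_left, hx, mul_zero]
  have hmem : InnerProductSpace.gramSchmidtNormed ℝ M j ∈ Submodule.span ℝ (M '' Set.Iic j') := by
    have := InnerProductSpace.gramSchmidt_mem_span ℝ M (le_refl j)
    have h2 : InnerProductSpace.gramSchmidtNormed ℝ M j ∈ Submodule.span ℝ (M '' Set.Iic j) := by
      rw [InnerProductSpace.gramSchmidtNormed]
      exact Submodule.smul_mem _ _ this
    exact Submodule.span_mono (Set.image_mono (Set.Iic_subset_Iic.2 hj)) h2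
  exact key _ hmem
end

section
/- Let M : Fin k → ℝ^{m} be a family of vectors, A ⊆ Fin m a set of row indices, and F : Fin k → Fin m a map such that supp(M j) ∩ A ⊆ {F j} for every j. Then for every row index t ∈ A that is not in the range of F, one has (gramSchmidt ℝ M j)(t) = 0 for every j; i.e., the row t of the Q-factor is identically zero. -/
/-- First part of Corollary 3: if within the rows `A` each column `M j` has at most one
nonzero entry, in row `F j`, then every row `t ∈ A` not of the form `F j` is identically
zero in the Q-factor (Gram–Schmidt vectors) of the matrix with columns `M`. -/
theorem gramSchmidt_unselected_rows_zero (k m : ℕ)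
    (M : Fin k → EuclideanSpace ℝ (Fin m)) (A : Set (Fin m)) (F : Fin k → Fin m)
    (hsupp : ∀ j, supp (M j) ∩ A ⊆ {F j}) :
    ∀ t ∈ A, t ∉ Set.range F → ∀ j, InnerProductSpace.gramSchmidt ℝ M j t = 0 := by
  intro t htA htF j
  have hM : ∀ i : Fin k, M i t = 0 := by
    intro i
    by_contra h
    exact htF ⟨i, (hsupp i ⟨h, htA⟩).symm⟩
  have hmem := InnerProductSpace.gramSchmidt_mem_span (𝕜 := ℝ) M (le_refl j)
  refine Submodule.span_induction ?_ ?_ ?_ ?_ hmem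
  · rintro x ⟨i, -, rfl⟩; exact hM i
  · rfl
  · intro x y _ _ hx hy; rw [PiLp.add_apply, hx, hy, add_zero]
  · intro c x _ hx; rw [PiLp.smul_apply, hx, smul_zero]
end

section
/- Let M : Fin k → ℝ^{m} be a family of vectors, A ⊆ Fin m a set of row indices, and F : Fin k → Fin m a strictly monotone map with F j ∈ A and supp(M j) ∩ A ⊆ {F j} for every j. Then for all indices j < j' one has (gramSchmidt ℝ M j)(F j') = 0; i.e., the entry of the Q-factor in row F_{j'} and column j vanishes whenever j < j'. -/
/-- Second part of Corollary 3: if `F` is strictly monotone with `F j ∈ A`, and within the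
rows `A` each column `M j` has at most one nonzero entry, in row `F j`, then the entry of the
Q-factor (Gram–Schmidt vectors) in row `F j'` and column `j` vanishes whenever `j < j'`. -/
theorem gramSchmidt_selected_row_upper_zero (k m : ℕ)
    (M : Fin k → EuclideanSpace ℝ (Fin m)) (A : Set (Fin m)) (F : Fin k → Fin m)
    (hmono : StrictMono F) (hFA : ∀ j, F j ∈ A)
    (hsupp : ∀ j, supp (M j) ∩ A ⊆ {F j}) :
    ∀ j j' : Fin k, j < j' → InnerProductSpace.gramSchmidt ℝ M j (F j') = 0 := by
  intro j j' hjj'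
  have hmem := InnerProductSpace.gramSchmidt_mem_span ℝ M (le_refl j)
  have hle : Submodule.span ℝ (M '' Set.Iic j) ≤
      LinearMap.ker (EuclideanSpace.proj (F j') : EuclideanSpace ℝ (Fin m) →L[ℝ] ℝ).toLinearMap := by
    rw [Submodule.span_le]
    rintro _ ⟨i, hi, rfl⟩
    simp only [SetLike.mem_coe, LinearMap.mem_ker]
    show M i (F j') = 0
    by_contra hne
    have : F j' ∈ supp (M i) ∩ A := ⟨hne, hFA j'⟩
    have h := hsupp i this
    have : F i < F j' := hmono (lt_of_le_of_lt hi hjj')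
    simp only [Set.mem_singleton_iff] at h
    exact absurd h.symm this.ne
  have := hle hmem
  simpa using this
end
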